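/- For 0 < μ < 2 and n ≥ 2, the shifted Strauss exponent satisfies p_S(n+μ) > p_F(n), where p_F(n) = 1 + 2/n is the Fujita exponent. -/

import Mathlib

/-- The Strauss exponent: the positive root of `(ω-1)p² - (ω+1)p - 2 = 0` for `ω > 1`. -/
noncomputable def pS (ω : ℝ) : ℝ :=
  ((ω + 1) + Real.sqrt ((ω + 1) ^ 2 + 8 * (ω - 1))) / (2 * (ω - 1))

/-- For `0 < μ < 2` and `n ≥ 2`, the shifted Strauss exponent exceeds the Fujita
exponent `p_F(n) = 1 + 2/n`. -/
theorem stmt_3 (n : ℕ) (hn : 2 ≤ n) (μ : ℝ) (hμ0 : 0 < μ) (hμ2 : μ < 2) :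
    pS ((n : ℝ) + μ) > 1 + 2 / (n : ℝ) := by
  have hN : (2:ℝ) ≤ (n:ℝ) := by exact_mod_cast hn
  have hN0 : (0:ℝ) < (n:ℝ) := by linarith
  set N : ℝ := (n:ℝ) with hNdef
  set ω : ℝ := N + μ with hω
  have hω1 : 1 < ω := by simp only [hω]; linarith
  have hden : 0 < 2 * (ω - 1) := by linarith
  set p : ℝ := 1 + 2 / N with hp
  have hpN : p * N = N + 2 := by rw [hp, add_mul, div_mul_cancel₀ _ hN0.ne']; ring
  have hB : 0 ≤ 2 * (ω - 1) * p - (ω + 1) := by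
    have h : (2 * (ω - 1) * p - (ω + 1)) * N = 2 * (ω - 1) * (N + 2) - (ω + 1) * N := by
      rw [hp]; field_simp
    nlinarith [h, mul_pos hμ0 hN0]
  have hD : (2 * (ω - 1) * p - (ω + 1)) ^ 2 < (ω + 1) ^ 2 + 8 * (ω - 1) := by
    have key : (2 * (ω - 1) * (N + 2) - (ω + 1) * N) ^ 2 <
        ((ω + 1) ^ 2 + 8 * (ω - 1)) * N ^ 2 := by
      simp only [hω]
      nlinarith [sq_nonneg N, sq_nonneg μ, mul_pos hμ0 hN0, sq_nonneg (N - 2),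
        mul_pos (mul_pos hμ0 hN0) hN0, sq_nonneg (N*μ)]
    have h2 : (2 * (ω - 1) * p - (ω + 1)) * N = 2 * (ω - 1) * (N + 2) - (ω + 1) * N := by
      nlinarith [hpN]
    have h3 : ((2 * (ω - 1) * p - (ω + 1)) * N) ^ 2 < ((ω + 1) ^ 2 + 8 * (ω - 1)) * N ^ 2 := by
      rw [h2]; exact key
    have hN2 : 0 < N ^ 2 := by positivity
    nlinarith [h3]
  have hDnn : (0:ℝ) ≤ (ω + 1) ^ 2 + 8 * (ω - 1) := by nlinarith
  have hsq : 2 * (ω - 1) * p - (ω + 1) < Real.sqrt ((ω + 1) ^ 2 + 8 * (ω - 1)) :=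
    (Real.lt_sqrt hB).mpr hD
  show pS ω > p
  rw [pS, gt_iff_lt, lt_div_iff₀ hden]
  linarith
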